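/- Let m, n ≥ 3 be integers and consider the triangular-torus graph on the vertex set (ℤ/mℤ) × (ℤ/nℤ), in which two distinct vertices u, v are adjacent if and only if u − v ∈ {±(1,0), ±(0,1), ±(1,1)}. Then every independent set S of this graph satisfies 3·|S| ≤ m·n. (Lemma 4: for the kagomé and star lattices, the maximal number of pairwise unconnected units does not exceed one third of the number of units.) -/

import Mathlib

/-- Lemma 4 (kagomé/star lattice): every independent set `S` of the triangular-torus
graph on `(ℤ/m) × (ℤ/n)`, where distinct `u, v` are adjacent iff
`u − v ∈ {±(1,0), ±(0,1), ±(1,1)}`, satisfies `3·|S| ≤ m·n`. -/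
theorem triangular_torus_independent_card
    (m n : ℕ) (hm : 3 ≤ m) (hn : 3 ≤ n)
    (S : Finset (ZMod m × ZMod n))
    (hS : ∀ u ∈ S, ∀ v ∈ S, u ≠ v →
      u - v ∉ ({(1, 0), (0, 1), (1, 1), (-1, 0), (0, -1), (-1, -1)} :
        Set (ZMod m × ZMod n))) :
    3 * S.card ≤ m * n := by
  haveI : Fact (1 < m) := ⟨by omega⟩
  haveI : Fact (1 < n) := ⟨by omega⟩
  haveI : NeZero m := ⟨by omega⟩
  haveI : NeZero n := ⟨by omega⟩
  classical
  have h1m : (1 : ZMod m) ≠ 0 := one_ne_zero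
  have h1n : (1 : ZMod n) ≠ 0 := one_ne_zero
  set A : Finset (ZMod m × ZMod n) := {(0,0), (1,0), (1,1)} with hA
  have hAmem : ∀ a ∈ A, a = (0,0) ∨ a = (1,0) ∨ a = (1,1) := by
    intro a ha
    simpa [hA] using ha
  have hAcard : A.card = 3 := by
    rw [hA]
    rw [Finset.card_insert_of_notMem, Finset.card_insert_of_notMem,
      Finset.card_singleton]
    · simp [Prod.ext_iff, h1n]
    · simp [Prod.ext_iff, h1m]
  have key : (S.biUnion (fun s => A.image (fun a => s + a))).card = 3 * S.card := by
    rw [Finset.card_biUnion]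
    · rw [Finset.sum_congr rfl (fun s _ => ?_), Finset.sum_const, smul_eq_mul,
        mul_comm]
      rw [Finset.card_image_of_injective _ (add_right_injective s), hAcard]
    · intro s hs t ht hst
      rw [Function.onFun, Finset.disjoint_left]
      rintro x hx hx'
      simp only [Finset.mem_image] at hx hx'
      obtain ⟨a, ha, rfl⟩ := hx
      obtain ⟨b, hb, heq⟩ := hx'
      have hdiff : s - t = b - a := by
        rw [sub_eq_sub_iff_add_eq_add, ← heq]
        exact add_comm t b
      rcases hAmem a ha with rfl | rfl | rfl <;>
        rcases hAmem b hb with rfl | rfl | rfl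
      all_goals first
        | (exact hst (sub_eq_zero.mp (by rw [hdiff]; exact sub_self _)))
        | (exact hS s hs t ht hst (by
            rw [hdiff, Prod.mk_sub_mk]
            simp only [sub_zero, sub_self, zero_sub, Set.mem_insert_iff,
              Set.mem_singleton_iff]
            tauto))
  have hle : (S.biUnion (fun s => A.image (fun a => s + a))).card ≤
      Fintype.card (ZMod m × ZMod n) := Finset.card_le_univ _
  rw [key] at hle
  simpa [Fintype.card_prod, ZMod.card] using hle
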